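/- For the braid-type form f_5 = xyz(x+y+z)(x+y)(y+z) ∈ C[x,y,z], the quadric X² − XY + Y² − YZ + Z² annihilates f_5 under the apolar action; hence the apolar ideal of this irreducible arrangement of six lines has initial degree 2, strictly smaller than the bound min{|A|−n+1, n+1} = 3 valid for generic arrangements. -/

import Mathlib

open MvPolynomial

/-- The apolar action: `apol Φ f = Φ(∂/∂x₀,…,∂/∂xₙ) f`. -/
noncomputable def apol {σ K : Type*} [CommRing K] (Φ f : MvPolynomial σ K) :
    MvPolynomial σ K :=
  (AddMonoidAlgebra.coeff Φ).sum fun m c =>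
    (AddMonoidAlgebra.coeff f).sum fun n b =>
      if ∀ i ∈ m.support, m i ≤ n i then
        monomial (n - m) (c * b * ∏ i ∈ m.support, (Nat.descFactorial (n i) (m i) : K))
      else 0
namespace Stmt19Aux

open Finsupp

lemma apol_add_left {σ K : Type*} [CommRing K] (Φ Ψ f : MvPolynomial σ K) :
    apol (Φ + Ψ) f = apol Φ f + apol Ψ f := by
  unfold apol
  rw [AddMonoidAlgebra.coeff_add]
  refine Finsupp.sum_add_index' (fun m => ?_) (fun m c₁ c₂ => ?_)
  · simp
  · rw [← Finsupp.sum_add]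
    refine Finsupp.sum_congr fun n _ => ?_
    split <;> simp [add_mul]

lemma apol_add_right {σ K : Type*} [CommRing K] (Φ f g : MvPolynomial σ K) :
    apol Φ (f + g) = apol Φ f + apol Φ g := by
  unfold apol
  rw [← Finsupp.sum_add]
  refine Finsupp.sum_congr fun m _ => ?_
  rw [AddMonoidAlgebra.coeff_add]
  refine Finsupp.sum_add_index' (fun n => ?_) (fun n b₁ b₂ => ?_)
  · simp
  · split <;> simp [mul_add, add_mul]

lemma apol_mm {σ K : Type*} [CommRing K] (m n : σ →₀ ℕ) (c b : K) :
    apol (monomial m c) (monomial n b) =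
      if ∀ i ∈ m.support, m i ≤ n i then
        monomial (n - m) (c * b * ∏ i ∈ m.support, (Nat.descFactorial (n i) (m i) : K))
      else 0 := by
  unfold apol
  rw [MvPolynomial.sum_monomial_eq, MvPolynomial.sum_monomial_eq]
  · split <;> simp
  · simp

/-- exponent vector -/
noncomputable def e (a b c : ℕ) : Fin 3 →₀ ℕ :=
  Finsupp.single 0 a + Finsupp.single 1 b + Finsupp.single 2 c

@[simp] lemma e_apply_0 (a b c : ℕ) : e a b c 0 = a := by
  simp [e, Finsupp.single_apply]

@[simp] lemma e_apply_1 (a b c : ℕ) : e a b c 1 = b := by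
  simp [e, Finsupp.single_apply]

@[simp] lemma e_apply_2 (a b c : ℕ) : e a b c 2 = c := by
  simp [e, Finsupp.single_apply]

lemma e_self (m : Fin 3 →₀ ℕ) : m = e (m 0) (m 1) (m 2) := by
  ext i
  fin_cases i <;> simp

lemma e_sub (a b c a' b' c' : ℕ) :
    e a b c - e a' b' c' = e (a - a') (b - b') (c - c') := by
  ext i
  fin_cases i <;> simp [Finsupp.tsub_apply]

lemma e_eq_iff (a b c a' b' c' : ℕ) :
    e a b c = e a' b' c' ↔ a = a' ∧ b = b' ∧ c = c' := by
  constructor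
  · intro h
    exact ⟨by simpa using congrArg (fun f => f 0) h,
      by simpa using congrArg (fun f => f 1) h,
      by simpa using congrArg (fun f => f 2) h⟩
  · rintro ⟨rfl, rfl, rfl⟩; rfl

lemma e_sum (a b c : ℕ) : ∑ i ∈ (e a b c).support, e a b c i = a + b + c := by
  have : ∑ i ∈ (e a b c).support, e a b c i = (e a b c).sum fun _ k => k := rfl
  rw [this, Finsupp.sum_fintype _ _ (fun _ => rfl), Fin.sum_univ_three]
  simp

lemma df2 (n : ℕ) : n.descFactorial 2 = (n - 1) * n := by
  rw [show (2 : ℕ) = 1 + 1 from rfl, Nat.descFactorial_succ, Nat.descFactorial_one]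

lemma apol_ee (p q r u v w : ℕ) (c b : ℂ) :
    apol (monomial (e p q r) c) (monomial (e u v w) b) =
      if p ≤ u ∧ q ≤ v ∧ r ≤ w then
        monomial (e (u - p) (v - q) (w - r))
          (c * b * ((u.descFactorial p : ℂ) * (v.descFactorial q : ℂ) * (w.descFactorial r : ℂ)))
      else 0 := by
  rw [apol_mm, e_sub]
  have hsupp : ∀ i ∉ (e p q r).support, e p q r i = 0 :=
    fun i hi => Finsupp.notMem_support_iff.mp hi
  have hprod : (∏ i ∈ (e p q r).support, ((e u v w i).descFactorial (e p q r i) : ℂ))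
      = (u.descFactorial p : ℂ) * (v.descFactorial q : ℂ) * (w.descFactorial r : ℂ) := by
    rw [Finset.prod_subset (f := fun i => (((e u v w i).descFactorial (e p q r i) : ℂ)))
      (Finset.subset_univ ((e p q r).support))
      (fun i _ hi => by
        show ((e u v w i).descFactorial (e p q r i) : ℂ) = 1
        rw [hsupp i hi, Nat.descFactorial_zero, Nat.cast_one]),
      Fin.prod_univ_three]
    simp
  have hcond : (∀ i ∈ (e p q r).support, e p q r i ≤ e u v w i) ↔
      (p ≤ u ∧ q ≤ v ∧ r ≤ w) := by
    constructor
    · intro h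
      have key : ∀ i, e p q r i ≤ e u v w i := by
        intro i
        by_cases h0 : i ∈ (e p q r).support
        · exact h i h0
        · rw [hsupp i h0]; exact Nat.zero_le _
      exact ⟨by simpa using key 0, by simpa using key 1, by simpa using key 2⟩
    · rintro ⟨h1, h2, h3⟩ i _
      fin_cases i <;> simpa
  rw [hprod]
  rcases Classical.em (p ≤ u ∧ q ≤ v ∧ r ≤ w) with h | h
  · rw [if_pos (hcond.mpr h), if_pos h]
  · rw [if_neg (fun hc => h (hcond.mp hc)), if_neg h]

lemma mono (a b c : ℕ) (k : ℂ) :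
    (monomial (e a b c) k : MvPolynomial (Fin 3) ℂ)
      = C k * X 0 ^ a * X 1 ^ b * X 2 ^ c := by
  rw [X_pow_eq_monomial, X_pow_eq_monomial, X_pow_eq_monomial, C_apply,
    monomial_mul, monomial_mul, monomial_mul, e, zero_add, mul_one, mul_one, mul_one]

lemma decomp (Φ : MvPolynomial (Fin 3) ℂ) (h : Φ.totalDegree < 2) :
    Φ = monomial (e 0 0 0) (coeff (e 0 0 0) Φ) + monomial (e 1 0 0) (coeff (e 1 0 0) Φ)
      + monomial (e 0 1 0) (coeff (e 0 1 0) Φ)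
      + monomial (e 0 0 1) (coeff (e 0 0 1) Φ) := by
  ext m
  obtain ⟨u, v, w, rfl⟩ : ∃ u v w, m = e u v w := ⟨m 0, m 1, m 2, e_self m⟩
  by_cases h2 : u + v + w ≤ 1
  · have hu : u ≤ 1 := by omega
    have hv : v ≤ 1 := by omega
    have hw : w ≤ 1 := by omega
    interval_cases u <;> interval_cases v <;> interval_cases w <;>
      simp_all [coeff_add, coeff_monomial, e_eq_iff]
  · have hz : coeff (e u v w) Φ = 0 := by
      refine coeff_eq_zero_of_totalDegree_lt ?_
      rw [e_sum]
      omega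
    rw [hz]
    symm
    simp only [coeff_add, coeff_monomial, e_eq_iff]
    rw [if_neg (by omega), if_neg (by omega), if_neg (by omega), if_neg (by omega)]
    simp

end Stmt19Aux

open Stmt19Aux

/-- The quadric `X² − XY + Y² − YZ + Z²` annihilates the braid-type form
`f₅ = xyz(x+y+z)(x+y)(y+z)`, and nothing of degree < 2 does; hence the apolar ideal of
this irreducible arrangement of six lines has initial degree 2, strictly smaller than
the bound `min(|A|−n+1, n+1) = min(6−2+1, 2+1) = 3` valid for generic arrangements. -/
theorem stmt19 :
    let f₅ : MvPolynomial (Fin 3) ℂ :=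
      X 0 * X 1 * X 2 * (X 0 + X 1 + X 2) * (X 0 + X 1) * (X 1 + X 2)
    let Q : MvPolynomial (Fin 3) ℂ :=
      X 0 ^ 2 - X 0 * X 1 + X 1 ^ 2 - X 1 * X 2 + X 2 ^ 2
    apol Q f₅ = 0 ∧ Q ≠ 0 ∧ Q.totalDegree = 2 ∧
    (∀ Φ : MvPolynomial (Fin 3) ℂ, Φ.totalDegree < 2 → apol Φ f₅ = 0 → Φ = 0) ∧
    (2 : ℕ) < min (6 - 2 + 1) (2 + 1) := by
  intro f₅ Q
  have hf : f₅ = monomial (e 3 2 1) 1 + monomial (e 3 1 2) 1 + monomial (e 2 3 1) 2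
      + monomial (e 2 2 2) 3 + monomial (e 1 4 1) 1 + monomial (e 1 3 2) 2
      + monomial (e 2 1 3) 1 + monomial (e 1 2 3) 1 := by
    show X 0 * X 1 * X 2 * (X 0 + X 1 + X 2) * (X 0 + X 1) * (X 1 + X 2) = _
    simp only [mono, map_one, map_ofNat, map_neg]
    ring
  have hQ : Q = monomial (e 2 0 0) 1 + monomial (e 1 1 0) (-1) + monomial (e 0 2 0) 1
      + monomial (e 0 1 1) (-1) + monomial (e 0 0 2) 1 := by
    show X 0 ^ 2 - X 0 * X 1 + X 1 ^ 2 - X 1 * X 2 + X 2 ^ 2 = _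
    simp only [mono, map_one, map_ofNat, map_neg]
    ring
  refine ⟨?_, ?_, ?_, ?_, by norm_num⟩
  · rw [hQ, hf]
    simp only [apol_add_left, apol_add_right, apol_ee]
    norm_num [Nat.descFactorial_one, df2]
    simp only [mono, map_one, map_ofNat, map_neg]
    ring
  · intro h0
    have := congrArg (coeff (e 2 0 0)) h0
    rw [hQ] at this
    simp [coeff_add, coeff_monomial, e_eq_iff] at this
  · refine le_antisymm ?_ ?_
    · have hb : ∀ (a b c : ℕ) (k : ℂ), a + b + c ≤ 2 →
          (monomial (e a b c) k).totalDegree ≤ 2 := by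
        intro a b c k hle
        refine (totalDegree_monomial_le _ _).trans ?_
        have : ((e a b c).sum fun _ => id) = a + b + c := e_sum a b c
        omega
      rw [hQ]
      refine (totalDegree_add _ _).trans (max_le ((totalDegree_add _ _).trans
        (max_le ((totalDegree_add _ _).trans (max_le ((totalDegree_add _ _).trans
        (max_le (hb _ _ _ _ (by norm_num)) (hb _ _ _ _ (by norm_num))))
        (hb _ _ _ _ (by norm_num)))) (hb _ _ _ _ (by norm_num))))
        (hb _ _ _ _ (by norm_num)))
    · have hmem : e 2 0 0 ∈ Q.support := by
        rw [mem_support_iff, hQ]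
        simp [coeff_add, coeff_monomial, e_eq_iff]
      have := le_totalDegree hmem
      have hs : ((e 2 0 0).sum fun _ n => n) = 2 := e_sum 2 0 0
      rw [totalDegree]
      rw [totalDegree] at this
      omega
  · intro Φ hdeg happ
    have hd := decomp Φ hdeg
    rw [hd, hf] at happ
    simp only [apol_add_left, apol_add_right, apol_ee] at happ
    norm_num [Nat.descFactorial_one, df2] at happ
    have h1 := congrArg (coeff (e 3 2 1)) happ
    have h2 := congrArg (coeff (e 0 4 1)) happ
    have h3 := congrArg (coeff (e 3 2 0)) happ
    have h4 := congrArg (coeff (e 3 1 1)) happ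
    simp only [coeff_add, coeff_monomial, e_eq_iff, coeff_zero] at h1 h2 h3 h4
    norm_num at h1 h2 h3 h4
    have hc : MvPolynomial.coeff (Stmt19Aux.e 0 1 0) Φ = 0 := by
      linear_combination h4 / 2 - h3
    rw [hd, h1, h2, h3, hc]
    simp
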